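/- Discrete maximum bound principle for the scalar ETD1 step: suppose |u| ≤ 1 and |N(u)| ≤ S for a constant S > 0. Then for any Δt > 0, the ETD1 update u⁺ = e^{-SΔt}u + Δt·((1 - e^{-SΔt})/(SΔt))·N(u) satisfies |u⁺| ≤ 1. -/

import Mathlib

theorem etd1_mbp (S Δt : ℝ) (hS : 0 < S) (hΔt : 0 < Δt)
    (u : ℝ) (hu : |u| ≤ 1) (N : ℝ → ℝ) (hN : |N u| ≤ S) :
    |Real.exp (-(S * Δt)) * u + ((1 - Real.exp (-(S * Δt))) / S) * N u| ≤ 1 := by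
  set e := Real.exp (-(S * Δt)) with he
  have he0 : 0 < e := Real.exp_pos _
  have he1 : e ≤ 1 := by
    rw [he]
    apply Real.exp_le_one_iff.mpr
    nlinarith
  calc |e * u + ((1 - e) / S) * N u|
      ≤ |e * u| + |((1 - e) / S) * N u| := abs_add_le _ _
    _ ≤ e * 1 + ((1 - e) / S) * S := by
        gcongr ?_ + ?_
        · rw [abs_mul, abs_of_pos he0]
          exact mul_le_mul_of_nonneg_left hu he0.le
        · rw [abs_mul, abs_of_nonneg (div_nonneg (by linarith) hS.le)]
          exact mul_le_mul_of_nonneg_left hN (div_nonneg (by linarith) hS.le)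
    _ = 1 := by field_simp; ring
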